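/- For every element h of the group H = ⟨a, b, t ∣ t·b·t⁻¹ = b, t·a·t⁻¹ = b·a⟩ there exists a unique triple (p, q, w) with p, q ∈ ℤ and w ∈ F₂ such that the reduced word of w does not begin with b or b⁻¹ and h = t^p · b^q · ι(w). -/

import Mathlib

/-- Generators of `H`: `a = 0`, `b = 1`, `t = 2`.
Relators: `t·b·t⁻¹·b⁻¹` and `t·a·t⁻¹·a⁻¹·b⁻¹`. -/
def hRels : Set (FreeGroup (Fin 3)) :=
  { FreeGroup.of (2 : Fin 3) * FreeGroup.of (1 : Fin 3) * (FreeGroup.of (2 : Fin 3))⁻¹ *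
      (FreeGroup.of (1 : Fin 3))⁻¹,
    FreeGroup.of (2 : Fin 3) * FreeGroup.of (0 : Fin 3) * (FreeGroup.of (2 : Fin 3))⁻¹ *
      (FreeGroup.of (0 : Fin 3))⁻¹ * (FreeGroup.of (1 : Fin 3))⁻¹ }

/-- The group `H = ⟨a, b, t ∣ t·b·t⁻¹ = b, t·a·t⁻¹ = b·a⟩`. -/
abbrev HGrp : Type := PresentedGroup hRels

/-- The image of the generator `a` in `H`. -/
def aH : HGrp := PresentedGroup.of 0
/-- The image of the generator `b` in `H`. -/
def bH : HGrp := PresentedGroup.of 1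
/-- The image of the generator `t` in `H`. -/
def tH : HGrp := PresentedGroup.of 2

/-- The free group on two generators `a = 0`, `b = 1`. -/
abbrev F₂ : Type := FreeGroup (Fin 2)

/-- `w ∈ F₂` does not begin with `b` or `b⁻¹`: the first letter of its reduced word
(if any) is not the generator `b = 1`. -/
def NoLeadB (w : F₂) : Prop := ∀ l ∈ w.toWord.head?, l.1 ≠ (1 : Fin 2)

/-- The homomorphism `ι : F₂ →* H` sending the generators `a`, `b` of `F₂` to the
elements `a`, `b` of `H`. -/
def ι : F₂ →* HGrp := FreeGroup.lift (fun i => if i = 0 then aH else bH)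

section FGpart
open FreeGroup List

def zrep (q : ℤ) : List (Fin 2 × Bool) := List.replicate q.natAbs ((1 : Fin 2), decide (0 ≤ q))

lemma mk_rep_true (n : ℕ) :
    FreeGroup.mk (List.replicate n ((1:Fin 2), true)) = FreeGroup.of (1 : Fin 2) ^ n := by
  rw [← FreeGroup.toWord_of_pow (1 : Fin 2) n, FreeGroup.mk_toWord]

lemma mk_zrep (q : ℤ) : FreeGroup.mk (zrep q) = (FreeGroup.of (1 : Fin 2)) ^ q := by
  rcases q with n | n
  · have : zrep (Int.ofNat n) = List.replicate n ((1:Fin 2), true) := by simp [zrep]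
    rw [this, mk_rep_true]; norm_cast
  · have h1 : FreeGroup.mk (List.replicate (n+1) ((1:Fin 2), false))
        = (FreeGroup.of (1:Fin 2) ^ (n+1))⁻¹ := by
      rw [← mk_rep_true, FreeGroup.inv_mk]
      congr 1
      simp [FreeGroup.invRev, List.map_replicate]
    have : zrep (Int.negSucc n) = List.replicate (n+1) ((1:Fin 2), false) := by
      simp [zrep]
    rw [this, h1, zpow_negSucc]

lemma reduce_rep_append (n : ℕ) (s : Bool) (M : List (Fin 2 × Bool))
    (hM : FreeGroup.reduce M = M) (hhd : ∀ l ∈ M.head?, l.1 ≠ (1 : Fin 2)) :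
    FreeGroup.reduce (List.replicate n ((1:Fin 2), s) ++ M) = List.replicate n ((1:Fin 2), s) ++ M := by
  induction n with
  | zero => simpa using hM
  | succ n ih =>
    rw [List.replicate_succ, List.cons_append, FreeGroup.reduce.cons, ih]
    cases n with
    | zero =>
      simp only [List.replicate_zero, List.nil_append]
      cases M with
      | nil => rfl
      | cons hd tl =>
        have : hd.1 ≠ (1 : Fin 2) := hhd hd (by simp)
        simp [this.symm, Ne.symm this]
    | succ m =>
      simp [List.replicate_succ]

lemma toWord_bpow_mul (q : ℤ) (w : F₂) (hw : NoLeadB w) :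
    (FreeGroup.of (1 : Fin 2) ^ q * w).toWord = zrep q ++ w.toWord := by
  conv_lhs => rw [← mk_zrep, ← FreeGroup.mk_toWord (x := w), FreeGroup.mul_mk, FreeGroup.toWord_mk]
  show FreeGroup.reduce (List.replicate q.natAbs ((1:Fin 2), _) ++ w.toWord) = _
  rw [reduce_rep_append _ _ _ w.reduce_toWord hw]
  rfl

lemma rep_append_inj : ∀ (m n : ℕ) (s s' : Bool) (L1 L2 : List (Fin 2 × Bool)),
    (∀ l ∈ L1.head?, l.1 ≠ (1 : Fin 2)) → (∀ l ∈ L2.head?, l.1 ≠ (1 : Fin 2)) →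
    List.replicate m ((1:Fin 2), s) ++ L1 = List.replicate n ((1:Fin 2), s') ++ L2 →
    (m = n ∧ L1 = L2) ∧ (m ≠ 0 → s = s') := by
  intro m
  induction m with
  | zero =>
    intro n s s' L1 L2 h1 h2 heq
    cases n with
    | zero => simp_all
    | succ k =>
      exfalso
      rw [List.replicate_succ] at heq
      simp only [List.replicate_zero, List.nil_append, List.cons_append] at heq
      have := h1 ((1:Fin 2), s') (by rw [heq]; simp)
      exact this rfl
  | succ m ih =>
    intro n s s' L1 L2 h1 h2 heq
    cases n with
    | zero =>
      exfalso
      rw [List.replicate_succ] at heq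
      simp only [List.replicate_zero, List.nil_append, List.cons_append] at heq
      have := h2 ((1:Fin 2), s) (by rw [← heq]; simp)
      exact this rfl
    | succ k =>
      rw [List.replicate_succ, List.replicate_succ] at heq
      simp only [List.cons_append, List.cons.injEq, Prod.mk.injEq] at heq
      obtain ⟨⟨-, hs⟩, htl⟩ := heq
      obtain ⟨⟨hmn, hL⟩, -⟩ := ih k s s' L1 L2 h1 h2 htl
      subst hs
      exact ⟨⟨by omega, hL⟩, fun _ => rfl⟩

lemma bpow_mul_inj {q q' : ℤ} {w w' : F₂} (hw : NoLeadB w) (hw' : NoLeadB w')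
    (h : FreeGroup.of (1 : Fin 2) ^ q * w = FreeGroup.of (1 : Fin 2) ^ q' * w') :
    q = q' ∧ w = w' := by
  have := congrArg FreeGroup.toWord h
  rw [toWord_bpow_mul q w hw, toWord_bpow_mul q' w' hw'] at this
  obtain ⟨⟨hmn, hL⟩, hs⟩ := rep_append_inj _ _ _ _ _ _ hw hw' this
  refine ⟨?_, FreeGroup.toWord_injective hL⟩
  rcases eq_or_ne q.natAbs 0 with h0 | h0
  · omega
  · have := hs h0
    rw [decide_eq_decide] at this
    omega

lemma exists_decomp (v : F₂) : ∃ q : ℤ, ∃ w : F₂, NoLeadB w ∧ v = FreeGroup.of (1 : Fin 2) ^ q * w := by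
  generalize hL : v.toWord.length = n
  induction n using Nat.strong_induction_on generalizing v with
  | _ n ih =>
    by_cases hv : NoLeadB v
    · exact ⟨0, v, hv, by simp⟩
    · simp only [NoLeadB, not_forall] at hv
      obtain ⟨l, hl, hl1⟩ := hv
      simp only [not_not] at hl1
      obtain ⟨T, hT⟩ : ∃ T, v.toWord = l :: T := by
        cases h : v.toWord with
        | nil => rw [h] at hl; simp at hl
        | cons a T => rw [h] at hl; simp at hl; exact ⟨T, by rw [hl]⟩
      set v' : F₂ := FreeGroup.mk T with hv'
      have hlen : v'.toWord.length < n := by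
        have := FreeGroup.Red.length_le (FreeGroup.reduce.red (L := T))
        rw [← hL, hT]
        simp only [hv', FreeGroup.toWord_mk]
        simpa using Nat.lt_succ_of_le this
      obtain ⟨q, w, hw, hvw⟩ := ih _ hlen v' rfl
      have hsplit : v = FreeGroup.mk [l] * v' := by
        rw [hv', FreeGroup.mul_mk, List.singleton_append, ← hT, FreeGroup.mk_toWord]
      have hmkl : FreeGroup.mk [l] = FreeGroup.of (1 : Fin 2) ^ (if l.2 then (1:ℤ) else -1) := by
        obtain ⟨x, s⟩ := l
        cases s with
        | false =>
          simp only at hl1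
          subst hl1
          have h2 : FreeGroup.mk [((1:Fin 2), false)] = (FreeGroup.of (1:Fin 2))⁻¹ := by
            rw [show FreeGroup.of (1:Fin 2) = FreeGroup.mk [((1:Fin 2), true)] from rfl,
              FreeGroup.inv_mk]
            simp [FreeGroup.invRev]
          rw [h2]
          simp
        | true =>
          simp only [if_true, zpow_one]
          simp at hl1
          rw [hl1]
          rfl
      refine ⟨(if l.2 then (1:ℤ) else -1) + q, w, hw, ?_⟩
      rw [hsplit, hmkl, hvw, zpow_add, mul_assoc]

end FGpart

open SemidirectProduct

noncomputable section

def φf : F₂ →* F₂ :=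
  FreeGroup.lift (fun i => if i = 0 then FreeGroup.of (1:Fin 2) * FreeGroup.of (0:Fin 2)
    else FreeGroup.of (1:Fin 2))

def φg : F₂ →* F₂ :=
  FreeGroup.lift (fun i => if i = 0 then (FreeGroup.of (1:Fin 2))⁻¹ * FreeGroup.of (0:Fin 2)
    else FreeGroup.of (1:Fin 2))

def φA : F₂ ≃* F₂ := by
  refine MonoidHom.toMulEquiv φf φg ?_ ?_ <;>
  · apply FreeGroup.ext_hom
    intro i
    fin_cases i <;> simp [φf, φg, mul_assoc]

lemma φA_a : φA (FreeGroup.of 0) = FreeGroup.of 1 * FreeGroup.of 0 := by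
  simp [φA, φf, MonoidHom.toMulEquiv]

lemma φA_b : φA (FreeGroup.of 1) = FreeGroup.of 1 := by
  simp [φA, φf, MonoidHom.toMulEquiv]

def φZ : Multiplicative ℤ →* MulAut F₂ := zpowersHom _ φA

lemma φZ_one : φZ (Multiplicative.ofAdd 1) = φA := by
  simp [φZ, zpowersHom_apply]

abbrev Gsd : Type := SemidirectProduct F₂ (Multiplicative ℤ) φZ

lemma rel_mk : ∀ r ∈ hRels, PresentedGroup.mk hRels r = 1 := by
  intro r hr
  change (QuotientGroup.mk r : HGrp) = 1
  rw [QuotientGroup.eq_one_iff]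
  exact Subgroup.subset_normalClosure hr

lemma rel_b : tH * bH * tH⁻¹ = bH := by
  have h : tH * bH * tH⁻¹ * bH⁻¹ = 1 := by
    have := rel_mk _ (Set.mem_insert _ _)
    simp only [_root_.map_mul, _root_.map_inv] at this
    exact this
  exact mul_inv_eq_one.mp h

lemma rel_a : tH * aH * tH⁻¹ = bH * aH := by
  have h : tH * aH * tH⁻¹ * aH⁻¹ * bH⁻¹ = 1 := by
    have := rel_mk _ (Set.mem_insert_iff.2 (Or.inr rfl))
    simp only [_root_.map_mul, _root_.map_inv] at this
    exact this
  have h2 : tH * aH * tH⁻¹ * aH⁻¹ = bH := mul_inv_eq_one.mp h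
  have h3 := congrArg (· * aH) h2
  simpa [mul_assoc] using h3

lemma ι_a : ι (FreeGroup.of 0) = aH := by simp [ι]
lemma ι_b : ι (FreeGroup.of 1) = bH := by simp [ι]

lemma key1 (w : F₂) : ι (φA w) = tH * ι w * tH⁻¹ := by
  have key : ι.comp φA.toMonoidHom = (MulAut.conj tH).toMonoidHom.comp ι := by
    apply FreeGroup.ext_hom
    intro i
    fin_cases i
    · show ι (φA (FreeGroup.of 0)) = (MulAut.conj tH).toMonoidHom (ι (FreeGroup.of 0))
      rw [φA_a, _root_.map_mul, ι_a, ι_b]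
      show bH * aH = tH * aH * tH⁻¹
      rw [rel_a]
    · show ι (φA (FreeGroup.of 1)) = (MulAut.conj tH).toMonoidHom (ι (FreeGroup.of 1))
      rw [φA_b, ι_b]
      show bH = tH * bH * tH⁻¹
      rw [rel_b]
  simpa using DFunLike.congr_fun key w

lemma key1' (w : F₂) : ι (φA⁻¹ w) = tH⁻¹ * ι w * tH := by
  have h := key1 (φA⁻¹ w)
  rw [show φA (φA⁻¹ w) = w from φA.apply_symm_apply w] at h
  rw [h]
  group

lemma keyZ (n : ℤ) (w : F₂) : ι ((φA ^ n) w) = tH ^ n * ι w * tH ^ (-n) := by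
  induction n using Int.induction_on generalizing w with
  | zero => simp
  | succ k ih =>
    have h : (φA ^ ((k:ℤ) + 1)) w = (φA ^ (k:ℤ)) (φA w) := by
      rw [zpow_add_one]; rfl
    rw [h, ih, key1]
    group
  | pred k ih =>
    have h : (φA ^ (-(k:ℤ) - 1)) w = (φA ^ (-(k:ℤ))) (φA⁻¹ w) := by
      rw [sub_eq_add_neg, zpow_add, zpow_neg_one]; rfl
    rw [h, ih, key1']
    group

def τ : Multiplicative ℤ →* HGrp := zpowersHom _ tH

def Ψ : Gsd →* HGrp :=
  SemidirectProduct.lift ι τ (by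
    intro g
    apply FreeGroup.ext_hom
    intro i
    simp only [MonoidHom.comp_apply, MulEquiv.coe_toMonoidHom, MulAut.conj_apply]
    have h : φZ g (FreeGroup.of i) = (φA ^ g.toAdd) (FreeGroup.of i) := rfl
    rw [h, keyZ]
    simp only [τ, zpowersHom_apply]
    group)

lemma Ψ_inl (w : F₂) : Ψ (inl w) = ι w := SemidirectProduct.lift_inl _ _ _ _
lemma Ψ_inr (g : Multiplicative ℤ) : Ψ (inr g) = tH ^ g.toAdd := SemidirectProduct.lift_inr _ _ _ _

def fgen : Fin 3 → Gsd := fun i =>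
  if i = 0 then SemidirectProduct.inl (FreeGroup.of (0 : Fin 2))
  else if i = 1 then SemidirectProduct.inl (FreeGroup.of (1 : Fin 2))
  else SemidirectProduct.inr (Multiplicative.ofAdd 1)

lemma fgen0 : fgen 0 = inl (FreeGroup.of (0 : Fin 2)) := rfl
lemma fgen1 : fgen 1 = inl (FreeGroup.of (1 : Fin 2)) := rfl
lemma fgen2 : fgen 2 = inr (Multiplicative.ofAdd 1) := rfl

lemma fgen_rels : ∀ r ∈ hRels, FreeGroup.lift fgen r = 1 := by
  intro r hr
  rcases hr with rfl | rfl
  · simp only [_root_.map_mul, _root_.map_inv, FreeGroup.lift_apply_of, fgen1, fgen2]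
    rw [mul_inv_eq_one, ← _root_.map_inv inr, ← inl_aut, φZ_one, φA_b]
  · simp only [_root_.map_mul, _root_.map_inv, FreeGroup.lift_apply_of, fgen0, fgen1, fgen2]
    have h1 : (inr (Multiplicative.ofAdd 1) * inl (FreeGroup.of (0:Fin 2)) *
        (inr (Multiplicative.ofAdd (1:ℤ)))⁻¹ : Gsd)
        = inl (FreeGroup.of (1:Fin 2) * FreeGroup.of (0:Fin 2)) := by
      rw [← _root_.map_inv inr, ← inl_aut, φZ_one, φA_a]
    rw [h1, ← _root_.map_inv, ← _root_.map_mul, ← _root_.map_inv, ← _root_.map_mul]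
    have h2 : FreeGroup.of (1:Fin 2) * FreeGroup.of (0:Fin 2) * (FreeGroup.of (0:Fin 2))⁻¹ *
        (FreeGroup.of (1:Fin 2))⁻¹ = 1 := by group
    rw [h2, map_one]

def Θ : HGrp →* Gsd := PresentedGroup.toGroup fgen_rels

lemma Θ_a : Θ aH = inl (FreeGroup.of (0:Fin 2)) :=
  (PresentedGroup.toGroup.of fgen_rels (x := (0 : Fin 3))).trans fgen0
lemma Θ_b : Θ bH = inl (FreeGroup.of (1:Fin 2)) :=
  (PresentedGroup.toGroup.of fgen_rels (x := (1 : Fin 3))).trans fgen1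
lemma Θ_t : Θ tH = inr (Multiplicative.ofAdd 1) :=
  (PresentedGroup.toGroup.of fgen_rels (x := (2 : Fin 3))).trans fgen2

lemma ΨΘ : Ψ.comp Θ = MonoidHom.id HGrp := by
  apply PresentedGroup.ext
  intro i
  fin_cases i
  · show Ψ (Θ aH) = aH
    rw [Θ_a, Ψ_inl, ι_a]
  · show Ψ (Θ bH) = bH
    rw [Θ_b, Ψ_inl, ι_b]
  · show Ψ (Θ tH) = tH
    rw [Θ_t, Ψ_inr]
    simp

lemma Θ_ι (w : F₂) : Θ (ι w) = inl w := by
  have h : Θ.comp ι = (inl : F₂ →* Gsd) := by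
    apply FreeGroup.ext_hom
    intro i
    fin_cases i
    · show Θ (ι (FreeGroup.of 0)) = inl (FreeGroup.of 0)
      rw [ι_a, Θ_a]
    · show Θ (ι (FreeGroup.of 1)) = inl (FreeGroup.of 1)
      rw [ι_b, Θ_b]
  exact DFunLike.congr_fun h w

lemma ΘΨ : Θ.comp Ψ = MonoidHom.id Gsd := by
  apply SemidirectProduct.hom_ext
  · apply FreeGroup.ext_hom
    intro i
    show Θ (Ψ (inl (FreeGroup.of i))) = inl (FreeGroup.of i)
    rw [Ψ_inl]
    exact Θ_ι _
  · apply MonoidHom.ext_mint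
    show Θ (Ψ (inr (Multiplicative.ofAdd 1))) = ((MonoidHom.id Gsd).comp inr) (Multiplicative.ofAdd 1)
    rw [Ψ_inr]
    simp only [MonoidHom.comp_apply, MonoidHom.id_apply]
    simpa using Θ_t

end


open SemidirectProduct in
/-- Every element of `H` can be uniquely written as `t^p · b^q · ι(w)` with `p, q ∈ ℤ`
and `w ∈ F₂` a word not beginning with `b^{±1}`. -/
theorem exists_unique_normal_form (h : HGrp) :
    ∃! pqw : ℤ × ℤ × F₂, NoLeadB pqw.2.2 ∧ h = tH ^ pqw.1 * bH ^ pqw.2.1 * ι pqw.2.2 := by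
  classical
  have hΨΘ : ∀ z : HGrp, Ψ (Θ z) = z := fun z => DFunLike.congr_fun ΨΘ z
  have ofAdd_pow : ∀ p : ℤ, (Multiplicative.ofAdd (1:ℤ)) ^ p = Multiplicative.ofAdd p := by
    intro p
    rw [← ofAdd_zsmul]
    simp
  have Θform : ∀ (p q : ℤ) (w : F₂),
      Θ (tH ^ p * bH ^ q * ι w)
        = inr (Multiplicative.ofAdd p) * inl (FreeGroup.of (1:Fin 2) ^ q * w) := by
    intro p q w
    rw [map_mul, map_mul, map_zpow, map_zpow, Θ_t, Θ_b, Θ_ι, ← map_zpow inr, ofAdd_pow,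
      ← map_zpow (inl : F₂ →* Gsd), mul_assoc, ← _root_.map_mul (inl : F₂ →* Gsd)]
  set g : Gsd := Θ h with hg
  set p : ℤ := g.right.toAdd with hp
  set v : F₂ := (φA ^ (-p)) g.left with hv
  obtain ⟨q, w, hw, hvqw⟩ := exists_decomp v
  have hιv : ι v = bH ^ q * ι w := by
    rw [hvqw, _root_.map_mul, map_zpow, ι_b]
  have hform : h = tH ^ p * bH ^ q * ι w := by
    have h1 : h = Ψ g := (hΨΘ h).symm
    have h2 : Ψ g = ι g.left * tH ^ p := by
      conv_lhs => rw [← inl_left_mul_inr_right g]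
      rw [map_mul, Ψ_inl, Ψ_inr]
    have h3 := keyZ (-p) g.left
    rw [neg_neg] at h3
    have h4 : ι g.left = tH ^ p * ι v * tH ^ (-p) := by
      rw [hv, h3]
      group
    rw [h1, h2, h4, hιv]
    group
  refine ⟨(p, q, w), ⟨hw, hform⟩, ?_⟩
  rintro ⟨p', q', w'⟩ ⟨hw', hform'⟩
  have heq : tH ^ p' * bH ^ q' * ι w' = tH ^ p * bH ^ q * ι w := by rw [← hform, ← hform']
  have heqΘ := congrArg Θ heq
  rw [Θform, Θform] at heqΘ
  have hpp : p' = p := by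
    have h5 := congrArg SemidirectProduct.right heqΘ
    simp only [mul_right, right_inr, right_inl, mul_one] at h5
    exact Multiplicative.ofAdd.injective h5
  subst hpp
  have hcanc : (inl (FreeGroup.of (1:Fin 2) ^ q' * w') : Gsd)
      = inl (FreeGroup.of (1:Fin 2) ^ q * w) := mul_left_cancel heqΘ
  have huv : FreeGroup.of (1:Fin 2) ^ q' * w' = FreeGroup.of (1:Fin 2) ^ q * w :=
    inl_injective hcanc
  obtain ⟨hq, hww⟩ := bpow_mul_inj hw' hw huv
  exact Prod.ext rfl (Prod.ext hq hww)
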